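/- Let k be an integer with k > 1, let a₁ = (l, 0) ∈ A, let b₁ ∈ Ab, let u ∈ A, and let z ∈ ℤ. Then the following condition holds: 'for every integer n there exists v ∈ A such that [b₁^{n}, u] = [b₁^{n·z}, a₁]·[b₁^{n}, [v, b₁^{n}]]' if and only if u = (l·z, 0), i.e. u is the z-th power a₁^{z} of a₁ in G = ℤ[1/k] ⋊ ℤ. Here [x, y] = x⁻¹y⁻¹xy. -/

import Mathlib

/-- The subring `ℤ[1/k] = {z·k^i : z, i ∈ ℤ}` of `ℚ`, as a set. -/
def zkSet (k : ℤ) : Set ℚ := {q | ∃ z i : ℤ, q = (z : ℚ) * (k : ℚ) ^ i}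

theorem zkSet_neg {k : ℤ} {q : ℚ} (hq : q ∈ zkSet k) : -q ∈ zkSet k := by
  obtain ⟨z, i, rfl⟩ := hq
  exact ⟨-z, i, by push_cast; ring⟩

theorem zkSet_mul_zpow {k : ℤ} (hk : (k : ℚ) ≠ 0) {q : ℚ} (hq : q ∈ zkSet k) (j : ℤ) :
    q * (k : ℚ) ^ j ∈ zkSet k := by
  obtain ⟨z, i, rfl⟩ := hq
  exact ⟨z, i + j, by rw [zpow_add₀ hk]; ring⟩

theorem zkSet_add {k : ℤ} (hk : (k : ℚ) ≠ 0) {p q : ℚ}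
    (hp : p ∈ zkSet k) (hq : q ∈ zkSet k) : p + q ∈ zkSet k := by
  obtain ⟨z₁, i₁, rfl⟩ := hp
  obtain ⟨z₂, i₂, rfl⟩ := hq
  rcases le_total i₁ i₂ with h | h
  · refine ⟨z₁ + z₂ * k ^ (i₂ - i₁).toNat, i₁, ?_⟩
    have hpow : ((k : ℚ)) ^ ((i₂ - i₁).toNat) = (k : ℚ) ^ (i₂ - i₁) := by
      rw [← zpow_natCast, Int.toNat_of_nonneg (by omega)]
    push_cast
    rw [hpow]
    have e : (k : ℚ) ^ (i₂ - i₁) * (k : ℚ) ^ i₁ = (k : ℚ) ^ i₂ := by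
      rw [← zpow_add₀ hk, show i₂ - i₁ + i₁ = i₂ from by omega]
    linear_combination (-(z₂ : ℚ)) * e
  · refine ⟨z₂ + z₁ * k ^ (i₁ - i₂).toNat, i₂, ?_⟩
    have hpow : ((k : ℚ)) ^ ((i₁ - i₂).toNat) = (k : ℚ) ^ (i₁ - i₂) := by
      rw [← zpow_natCast, Int.toNat_of_nonneg (by omega)]
    push_cast
    rw [hpow]
    have e : (k : ℚ) ^ (i₁ - i₂) * (k : ℚ) ^ i₂ = (k : ℚ) ^ i₁ := by
      rw [← zpow_add₀ hk, show i₁ - i₂ + i₂ = i₁ from by omega]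
    linear_combination (-(z₁ : ℚ)) * e

/-- The underlying set of the semidirect product `G = ℤ[1/k] ⋊ ℤ` (modelled inside
`ℚ × ℤ`): pairs `(y, m)` with multiplication `(y₁,m₁)(y₂,m₂) = (y₁ + y₂·k^{-m₁}, m₁+m₂)`. -/
@[ext]
structure BSQ (k : ℤ) : Type where
  y : ℚ
  m : ℤ

namespace BSQ

variable {k : ℤ}

instance : Mul (BSQ k) := ⟨fun g h => ⟨g.y + h.y * (k : ℚ) ^ (-g.m), g.m + h.m⟩⟩
instance : One (BSQ k) := ⟨⟨0, 0⟩⟩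
instance : Inv (BSQ k) := ⟨fun g => ⟨-g.y * (k : ℚ) ^ g.m, -g.m⟩⟩

@[simp] theorem mul_y (g h : BSQ k) : (g * h).y = g.y + h.y * (k : ℚ) ^ (-g.m) := rfl
@[simp] theorem mul_m (g h : BSQ k) : (g * h).m = g.m + h.m := rfl
@[simp] theorem one_y : (1 : BSQ k).y = 0 := rfl
@[simp] theorem one_m : (1 : BSQ k).m = 0 := rfl
@[simp] theorem inv_y (g : BSQ k) : g⁻¹.y = -g.y * (k : ℚ) ^ g.m := rfl
@[simp] theorem inv_m (g : BSQ k) : g⁻¹.m = -g.m := rfl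

theorem kq_ne_zero [Fact (1 < k)] : (k : ℚ) ≠ 0 := by
  have h : (1 : ℤ) < k := Fact.out
  have h' : (k : ℤ) ≠ 0 := by omega
  exact_mod_cast h'

private theorem mul_assoc' [Fact (1 < k)] (a b c : BSQ k) : a * b * c = a * (b * c) := by
  ext
  · simp only [mul_y, mul_m, neg_add, zpow_add₀ (kq_ne_zero (k := k))]
    ring
  · simp only [mul_m]
    ring

private theorem one_mul' [Fact (1 < k)] (a : BSQ k) : 1 * a = a := by
  ext <;> simp

private theorem mul_one' [Fact (1 < k)] (a : BSQ k) : a * 1 = a := by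
  ext <;> simp

private theorem inv_mul_cancel' [Fact (1 < k)] (a : BSQ k) : a⁻¹ * a = 1 := by
  ext
  · simp only [mul_y, inv_y, inv_m, one_y, neg_neg]
    ring
  · simp only [mul_m, inv_m, one_m]
    ring

/-- The group structure on `ℤ[1/k] ⋊ ℤ` (here on the ambient `ℚ ⋊ ℤ`). -/
instance [Fact (1 < k)] : Group (BSQ k) where
  mul := (· * ·)
  one := 1
  inv := Inv.inv
  mul_assoc := mul_assoc'
  one_mul := one_mul'
  mul_one := mul_one'
  inv_mul_cancel := inv_mul_cancel'

end BSQ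

/-- The group `G = ℤ[1/k] ⋊ ℤ`, as the subgroup of `ℚ ⋊ ℤ` of pairs whose first
coordinate lies in `ℤ[1/k]`. -/
def bsSubgroup (k : ℤ) [Fact (1 < k)] : Subgroup (BSQ k) where
  carrier := {g | g.y ∈ zkSet k}
  one_mem' := ⟨0, 0, by norm_num⟩
  mul_mem' := by
    intro a b ha hb
    exact zkSet_add BSQ.kq_ne_zero ha (zkSet_mul_zpow BSQ.kq_ne_zero hb _)
  inv_mem' := by
    intro a ha
    exact zkSet_mul_zpow BSQ.kq_ne_zero (zkSet_neg ha) _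

theorem mem_bsSubgroup {k : ℤ} [Fact (1 < k)] {g : BSQ k} (h : g.y ∈ zkSet k) :
    g ∈ bsSubgroup k := h

/-- The set `A = {(y,0) : y ∈ ℤ[1/k]}`. -/
def aSet (k : ℤ) : Set (BSQ k) := {g | g.y ∈ zkSet k ∧ g.m = 0}

/-- The set `Ab = {(y,1) : y ∈ ℤ[1/k]}`. -/
def abSet (k : ℤ) : Set (BSQ k) := {g | g.y ∈ zkSet k ∧ g.m = 1}

/-- The commutator `[x, y] = x⁻¹ y⁻¹ x y` (the paper's convention). -/
def gcomm {k : ℤ} [Fact (1 < k)] (x y : BSQ k) : BSQ k := x⁻¹ * y⁻¹ * x * y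

section Aux

variable {k : ℤ}

theorem zkSet_intCast (z : ℤ) : (z : ℚ) ∈ zkSet k := ⟨z, 0, by simp⟩

theorem zkSet_zpow (i : ℤ) : (k : ℚ) ^ i ∈ zkSet k := ⟨1, i, by simp⟩

theorem zkSet_mul (hk : (k : ℚ) ≠ 0) {p q : ℚ} (hp : p ∈ zkSet k) (hq : q ∈ zkSet k) :
    p * q ∈ zkSet k := by
  obtain ⟨z₁, i₁, rfl⟩ := hp
  obtain ⟨z₂, i₂, rfl⟩ := hq
  exact ⟨z₁ * z₂, i₁ + i₂, by rw [zpow_add₀ hk]; push_cast; ring⟩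

variable [Fact (1 < k)]

/-- Projection to the `m`-coordinate, as a monoid hom. -/
def projm : BSQ k →* Multiplicative ℤ where
  toFun g := Multiplicative.ofAdd g.m
  map_one' := rfl
  map_mul' := fun a b => rfl

theorem zpow_m (g : BSQ k) (n : ℤ) : (g ^ n).m = n * g.m := by
  have h := map_zpow (projm (k := k)) g n
  have h2 := congrArg Multiplicative.toAdd h
  simpa [projm, smul_eq_mul] using h2

theorem gcomm_right (x u : BSQ k) (hu : u.m = 0) :
    gcomm x u = ⟨u.y * (1 - (k : ℚ) ^ x.m), 0⟩ := by
  have hK : (k : ℚ) ^ x.m ≠ 0 := zpow_ne_zero _ BSQ.kq_ne_zero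
  ext
  · simp only [gcomm, BSQ.mul_y, BSQ.mul_m, BSQ.inv_y, BSQ.inv_m, hu, zpow_neg, zpow_zero,
      neg_zero, neg_neg]
    field_simp
    simp only [add_zero, zero_add, neg_add_cancel, zpow_neg, zpow_zero, div_inv_eq_mul, mul_one]
    ring
  · simp [gcomm, hu]

theorem gcomm_left (v x : BSQ k) (hv : v.m = 0) :
    gcomm v x = ⟨v.y * ((k : ℚ) ^ x.m - 1), 0⟩ := by
  have hK : (k : ℚ) ^ x.m ≠ 0 := zpow_ne_zero _ BSQ.kq_ne_zero
  ext
  · simp only [gcomm, BSQ.mul_y, BSQ.mul_m, BSQ.inv_y, BSQ.inv_m, hv, zpow_neg, zpow_zero,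
      neg_zero, neg_neg]
    field_simp
    simp only [add_zero, zero_add, zpow_neg, div_inv_eq_mul]
    ring
  · simp [gcomm, hv]

theorem mul_m_zero (a b : ℚ) : (⟨a, 0⟩ * ⟨b, 0⟩ : BSQ k) = ⟨a + b, 0⟩ := by
  ext <;> simp

/-- `K^z - 1 - z(K-1)` is divisible by `(K-1)²` within `ℤ[1/k]`, for `K = k^n`. -/
theorem pow_sub_linear (n : ℤ) (z : ℤ) :
    ∃ S ∈ zkSet k, ((k : ℚ) ^ n) ^ z - 1 - z * ((k : ℚ) ^ n - 1) =
      ((k : ℚ) ^ n - 1) ^ 2 * S := by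
  have hk : (k : ℚ) ≠ 0 := BSQ.kq_ne_zero
  have hK : (k : ℚ) ^ n ≠ 0 := zpow_ne_zero _ hk
  induction z using Int.induction_on with
  | zero => exact ⟨0, ⟨0, 0, by simp⟩, by simp⟩
  | succ m ih =>
    obtain ⟨S, hS, hEq⟩ := ih
    refine ⟨(k : ℚ) ^ n * S + m, zkSet_add hk (zkSet_mul hk (zkSet_zpow n) hS)
      (zkSet_intCast m), ?_⟩
    have : ((k : ℚ) ^ n) ^ ((m : ℤ) + 1) = ((k : ℚ) ^ n) ^ (m : ℤ) * (k : ℚ) ^ n :=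
      zpow_add_one₀ hK m
    rw [this]
    push_cast
    linear_combination ((k : ℚ) ^ n) * hEq
  | pred m ih =>
    obtain ⟨S, hS, hEq⟩ := ih
    refine ⟨(k : ℚ) ^ (-n) * S + ((m : ℚ) + 1) * (k : ℚ) ^ (-n), ?_, ?_⟩
    · exact zkSet_add hk (zkSet_mul hk (zkSet_zpow (-n)) hS)
        (zkSet_mul hk (by have := zkSet_intCast (k := k) (m + 1); push_cast at this; exact this) (zkSet_zpow (-n)))
    · have h1 : ((k : ℚ) ^ n) ^ (-(m : ℤ) - 1) = ((k : ℚ) ^ n) ^ (-(m : ℤ)) * ((k : ℚ) ^ n)⁻¹ :=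
        zpow_sub_one₀ hK _
      have h2 : (k : ℚ) ^ (-n) = ((k : ℚ) ^ n)⁻¹ := zpow_neg _ _
      have hKX : (k : ℚ) ^ n * ((k : ℚ) ^ n)⁻¹ = 1 := mul_inv_cancel₀ hK
      rw [h1, h2]
      push_cast at hEq ⊢
      linear_combination (((k : ℚ) ^ n)⁻¹) * hEq +
        (1 - ((m : ℚ) + 1) * ((k : ℚ) ^ n - 1)) * hKX
end Aux
/-- **Corollary 10 (definability of integer powers of `a₁`).** For `a₁ = (l,0) ∈ A`,
`b₁ ∈ Ab`, `u ∈ A` and `z ∈ ℤ`: the condition "for every integer `n` there exists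
`v ∈ A` with `[b₁^n, u] = [b₁^{n·z}, a₁]·[b₁^n, [v, b₁^n]]`" holds iff
`u = (l·z, 0)`, i.e. `u` is the `z`-th power `a₁^{z}` of `a₁`. -/
theorem commutator_condition_iff_eq_zpow (k : ℤ) [Fact (1 < k)] (l : ℚ)
    (hl : l ∈ zkSet k) (b₁ : BSQ k) (hb : b₁ ∈ abSet k) (u : BSQ k) (hu : u ∈ aSet k)
    (z : ℤ) :
    (∀ n : ℤ, ∃ v ∈ aSet k,
        gcomm (b₁ ^ n) u =
          gcomm (b₁ ^ (n * z)) (⟨l, 0⟩ : BSQ k) *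
            gcomm (b₁ ^ n) (gcomm v (b₁ ^ n))) ↔
      u = (⟨l * (z : ℚ), 0⟩ : BSQ k) := by
  obtain ⟨huy, hum⟩ := hu
  obtain ⟨hby, hbm⟩ := hb
  have hk : (k : ℚ) ≠ 0 := BSQ.kq_ne_zero
  have hk1 : (1 : ℚ) < (k : ℚ) := by exact_mod_cast (Fact.out : 1 < k)
  have hbn : ∀ n : ℤ, (b₁ ^ n).m = n := fun n => by rw [zpow_m, hbm, mul_one]
  -- rewrite the group-theoretic condition as a rational equation
  have cond : ∀ (n : ℤ) (v : BSQ k), v.m = 0 →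
      (gcomm (b₁ ^ n) u =
          gcomm (b₁ ^ (n * z)) (⟨l, 0⟩ : BSQ k) *
            gcomm (b₁ ^ n) (gcomm v (b₁ ^ n)) ↔
        u.y * (1 - (k : ℚ) ^ n) =
          l * (1 - (k : ℚ) ^ (n * z)) + v.y * ((k : ℚ) ^ n - 1) * (1 - (k : ℚ) ^ n)) := by
    intro n v hv
    rw [gcomm_left v _ hv, gcomm_right _ u hum, gcomm_right _ (⟨l, 0⟩ : BSQ k) rfl,
      gcomm_right _ (⟨v.y * ((k : ℚ) ^ (b₁ ^ n).m - 1), 0⟩ : BSQ k) rfl,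
      mul_m_zero, hbn n, hbn (n * z), BSQ.mk.injEq]
    simp
  constructor
  · intro h
    -- forward direction
    have hd : u.y - l * z ∈ zkSet k := by
      rw [sub_eq_add_neg]
      exact zkSet_add hk huy (zkSet_neg (zkSet_mul hk hl (zkSet_intCast z)))
    obtain ⟨a, i, hai⟩ := hd
    set s : ℕ := (-i).toNat with hs
    set c : ℤ := a * k ^ i.toNat with hc
    have hcs : (u.y - l * z) * (k : ℚ) ^ (s : ℕ) = (c : ℚ) := by
      rcases le_or_gt 0 i with hi | hi
      · have : s = 0 := by omega
        rw [this, hai, hc]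
        push_cast
        rw [← zpow_natCast (k : ℚ) i.toNat, Int.toNat_of_nonneg hi]
        ring
      · have h0 : i.toNat = 0 := by omega
        have hone : (k : ℚ) ^ i * (k : ℚ) ^ (s : ℤ) = 1 := by
          rw [← zpow_add₀ hk, show i + (s : ℤ) = 0 by omega, zpow_zero]
        rw [hai, hc, h0, ← zpow_natCast (k : ℚ) s]
        push_cast
        linear_combination (a : ℚ) * hone
    have hdvd : ∀ N : ℕ, ((k : ℤ) ^ (N + 1) - 1) ∣ c := by
      intro N
      set n : ℤ := (N : ℤ) + 1 with hn
      obtain ⟨v, ⟨hv1, hv2⟩, heq⟩ := h n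
      rw [cond n v hv2] at heq
      obtain ⟨S, hSmem, hS⟩ := pow_sub_linear (k := k) n z
      have hKz : (k : ℚ) ^ (n * z) = ((k : ℚ) ^ n) ^ z := zpow_mul _ _ _
      rw [hKz] at heq
      have hKnat : (k : ℚ) ^ n = (k : ℚ) ^ (N + 1 : ℕ) := by
        rw [← zpow_natCast (k : ℚ) (N + 1), hn]
        norm_num
      have hK1 : (1 : ℚ) < (k : ℚ) ^ n := by
        rw [hKnat]; exact one_lt_pow₀ hk1 (by omega)
      have hKne : (1 : ℚ) - (k : ℚ) ^ n ≠ 0 := by intro hcon; nlinarith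
      have hd2 : u.y - l * z = ((k : ℚ) ^ n - 1) * (l * S + v.y) := by
        apply mul_right_cancel₀ hKne
        linear_combination heq - l * hS
      have hrm : l * S + v.y ∈ zkSet k := zkSet_add hk (zkSet_mul hk hl hSmem) hv1
      obtain ⟨b, j, hbj⟩ := hrm
      set m : ℕ := (-(j + (s : ℤ))).toNat with hm
      set E : ℕ := (j + (s : ℤ) + (m : ℤ)).toNat with hE
      have hpow : (k : ℚ) ^ j * (k : ℚ) ^ (s : ℕ) * (k : ℚ) ^ (m : ℕ) = (k : ℚ) ^ (E : ℕ) := by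
        rw [← zpow_natCast (k : ℚ) s, ← zpow_natCast (k : ℚ) m, ← zpow_natCast (k : ℚ) E,
          ← zpow_add₀ hk, ← zpow_add₀ hk, hE,
          Int.toNat_of_nonneg (show (0 : ℤ) ≤ j + (s : ℤ) + (m : ℤ) by omega)]
      have hc2 : (c : ℚ) * (k : ℚ) ^ (m : ℕ) = ((k : ℚ) ^ (N + 1 : ℕ) - 1) * (b * (k : ℚ) ^ (E : ℕ)) := by
        rw [← hcs, hd2, hbj, ← hKnat]
        linear_combination ((k : ℚ) ^ n - 1) * (b : ℚ) * hpow
      have hZ : c * k ^ (m : ℕ) = ((k : ℤ) ^ (N + 1) - 1) * (b * k ^ (E : ℕ)) := by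
        exact_mod_cast hc2
      have hdvd1 : ((k : ℤ) ^ (N + 1) - 1) ∣ c * k ^ (m : ℕ) := Dvd.intro _ hZ.symm
      have hco : IsCoprime ((k : ℤ) ^ (N + 1) - 1) ((k : ℤ) ^ (m : ℕ)) :=
        IsCoprime.pow_right ⟨-1, k ^ N, by ring⟩
      exact hco.dvd_of_dvd_mul_right hdvd1
    -- conclude c = 0
    have hc0 : c = 0 := by
      by_contra hcne
      have hdc := hdvd c.natAbs
      have h2k : (2 : ℤ) ≤ k := by have : (1 : ℤ) < k := Fact.out; omega
      have hb1 : (2 : ℤ) ^ (c.natAbs + 1) ≤ k ^ (c.natAbs + 1) :=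
        pow_le_pow_left₀ (by norm_num) h2k _
      have hb2 : (c.natAbs : ℤ) + 1 < 2 ^ (c.natAbs + 1) := by
        exact_mod_cast (Nat.lt_two_pow_self (n := c.natAbs + 1))
      have habs : ((k : ℤ) ^ (c.natAbs + 1) - 1) ∣ |c| := (dvd_abs _ _).mpr hdc
      have hpos : 0 < |c| := abs_pos.mpr hcne
      have hle := Int.le_of_dvd hpos habs
      have : |c| = (c.natAbs : ℤ) := Int.abs_eq_natAbs c
      omega
    have hd0 : u.y - l * z = 0 := by
      have hks : (k : ℚ) ^ (s : ℕ) ≠ 0 := pow_ne_zero _ hk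
      have : (u.y - l * z) * (k : ℚ) ^ (s : ℕ) = 0 := by rw [hcs, hc0]; norm_num
      exact (mul_eq_zero.mp this).resolve_right hks
    ext
    · exact sub_eq_zero.mp hd0
    · exact hum
  · intro h n
    obtain ⟨S, hSmem, hS⟩ := pow_sub_linear (k := k) n z
    refine ⟨⟨-(l * S), 0⟩, ⟨zkSet_neg (zkSet_mul hk hl hSmem), rfl⟩, ?_⟩
    rw [cond n _ rfl, h]
    have hKz : (k : ℚ) ^ (n * z) = ((k : ℚ) ^ n) ^ z := zpow_mul _ _ _
    rw [hKz]
    dsimp only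
    linear_combination l * hS
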